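/- arXiv:2102.07556 — 4 statements merged into one kernel-verified Lean document; each statement's English description precedes it below -/
import Mathlib

section
/- For every integer N ≥ 1 and every σ > 0, the Stieltjes–Wigert partition-function integral with β = 2 has the closed form ∫_{(0,∞)^N} ∏_{i=1}^N exp(−(log u_i)²/(2σ²)) · ∏_{1≤i<j≤N} (u_i − u_j)² du₁…du_N = N! · (2πσ²)^{N/2} · exp(σ²(4N³ − N)/6) · ∏_{k=1}^{N−1} (1 − e^{−kσ²})^{N−k}. -/
open Real MeasureTheory Finset


lemma gauss_lin_integrable {a : ℝ} (ha : 0 < a) (c : ℝ) :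
    Integrable (fun x : ℝ => Real.exp (-a * x ^ 2 + c * x)) := by
  have h : ∀ x : ℝ, -a * x ^ 2 + c * x = -a * (x - c / (2 * a)) ^ 2 + c ^ 2 / (4 * a) := by
    intro x; field_simp; ring
  simp_rw [h, Real.exp_add]
  exact (((integrable_exp_neg_mul_sq ha).comp_sub_right (c / (2 * a))).mul_const _)

lemma gauss_lin {a : ℝ} (ha : 0 < a) (c : ℝ) :
    ∫ x : ℝ, Real.exp (-a * x ^ 2 + c * x) = Real.sqrt (π / a) * Real.exp (c ^ 2 / (4 * a)) := by
  have h : ∀ x : ℝ, -a * x ^ 2 + c * x = -a * (x - c / (2 * a)) ^ 2 + c ^ 2 / (4 * a) := by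
    intro x; field_simp; ring
  simp_rw [h, Real.exp_add]
  rw [integral_mul_const, integral_sub_right_eq_self (fun x => Real.exp (-a * x ^ 2)) (c / (2 * a)),
    integral_gaussian]

lemma sw_pt (σ : ℝ) (m : ℕ) (x : ℝ) :
    |Real.exp x| • (Real.exp (-(Real.log (Real.exp x)) ^ 2 / (2 * σ ^ 2)) * Real.exp x ^ m)
      = Real.exp (-(1/(2*σ^2)) * x ^ 2 + ((m:ℝ)+1) * x) := by
  simp only [smul_eq_mul, abs_of_pos (Real.exp_pos x), Real.log_exp]
  rw [← Real.exp_nat_mul, ← Real.exp_add, ← Real.exp_add]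
  congr 1
  ring

lemma sw_one_dim_integrable {σ : ℝ} (hσ : 0 < σ) (m : ℕ) :
    IntegrableOn (fun u => Real.exp (-(Real.log u) ^ 2 / (2 * σ ^ 2)) * u ^ m)
      (Set.Ioi (0:ℝ)) := by
  have himg : Set.Ioi (0:ℝ) = Real.exp '' Set.univ := by
    rw [Set.image_univ, Real.range_exp]
  rw [himg, integrableOn_image_iff_integrableOn_abs_deriv_smul MeasurableSet.univ
    (fun x _ => (Real.hasDerivAt_exp x).hasDerivWithinAt) (Real.exp_injective.injOn)]
  have ha : 0 < 1/(2*σ^2) := by positivity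
  exact ((gauss_lin_integrable ha ((m:ℝ)+1)).congr
    (Filter.Eventually.of_forall fun x => (sw_pt σ m x).symm)).integrableOn

lemma sw_one_dim {σ : ℝ} (hσ : 0 < σ) (m : ℕ) :
    (∫ u in Set.Ioi (0:ℝ), Real.exp (-(Real.log u) ^ 2 / (2 * σ ^ 2)) * u ^ m)
      = Real.sqrt (2 * π * σ ^ 2) * Real.exp (σ ^ 2 * ((m:ℝ)+1) ^ 2 / 2) := by
  have himg : Set.Ioi (0:ℝ) = Real.exp '' Set.univ := by
    rw [Set.image_univ, Real.range_exp]
  rw [himg, integral_image_eq_integral_abs_deriv_smul MeasurableSet.univ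
    (fun x _ => (Real.hasDerivAt_exp x).hasDerivWithinAt) (Real.exp_injective.injOn),
    setIntegral_univ]
  simp_rw [sw_pt σ m]
  rw [gauss_lin (by positivity : (0:ℝ) < 1/(2*σ^2)) ((m:ℝ)+1)]
  have h1 : π / (1/(2*σ^2)) = 2 * π * σ ^ 2 := by field_simp
  have h2 : ((m:ℝ)+1) ^ 2 / (4 * (1/(2*σ^2))) = σ ^ 2 * ((m:ℝ)+1) ^ 2 / 2 := by
    field_simp; ring
  rw [h1, h2]

lemma sum_perm_pairs {N : ℕ} (M : Matrix (Fin N) (Fin N) ℝ) :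
    ∑ p : Equiv.Perm (Fin N), ∑ q : Equiv.Perm (Fin N),
        ((Equiv.Perm.sign p : ℤ) : ℝ) * ((Equiv.Perm.sign q : ℤ) : ℝ) * ∏ i, M (p i) (q i)
      = (N.factorial : ℝ) * M.det := by
  have hdet : M.det = ∑ r : Equiv.Perm (Fin N),
      ((Equiv.Perm.sign r : ℤ) : ℝ) * ∏ j, M j (r j) := by
    rw [← Matrix.det_transpose, Matrix.det_apply]
    refine Finset.sum_congr rfl fun r _ => ?_
    simp [Units.smul_def, Matrix.transpose_apply]
  have key : ∀ p : Equiv.Perm (Fin N),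
      ∑ q : Equiv.Perm (Fin N),
          ((Equiv.Perm.sign q : ℤ) : ℝ) * ∏ i, M (p i) (q i)
        = ((Equiv.Perm.sign p : ℤ) : ℝ) * M.det := by
    intro p
    rw [hdet, Finset.mul_sum]
    rw [← Equiv.sum_comp (Equiv.mulRight p) (fun q => ((Equiv.Perm.sign q : ℤ) : ℝ) * ∏ i, M (p i) (q i))]
    apply Finset.sum_congr rfl
    intro r _
    have h1 : (Equiv.mulRight p) r = r * p := rfl
    rw [h1, Equiv.Perm.sign_mul]
    have h2 : ∏ i, M (p i) ((r * p) i) = ∏ j, M j (r j) := by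
      rw [← Equiv.prod_comp p (fun j => M j (r j))]
      apply Finset.prod_congr rfl; intro i _; rfl
    rw [h2]
    push_cast
    ring
  simp_rw [mul_assoc, ← Finset.mul_sum, key]
  have hsq : ∀ p : Equiv.Perm (Fin N),
      ((Equiv.Perm.sign p : ℤ) : ℝ) * (((Equiv.Perm.sign p : ℤ) : ℝ) * M.det) = M.det := by
    intro p
    rcases Int.units_eq_one_or (Equiv.Perm.sign p) with h | h <;> rw [h] <;> push_cast <;> ring
  simp_rw [hsq, Finset.sum_const, Finset.card_univ, Fintype.card_perm, Fintype.card_fin,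
    nsmul_eq_mul]

lemma prod_pairs_fin {N : ℕ} (g : ℕ → ℕ → ℝ) :
    ∏ i : Fin N, ∏ j ∈ Finset.Ioi i, g (i : ℕ) (j : ℕ)
      = ∏ j ∈ Finset.range N, ∏ i ∈ Finset.range j, g i j := by
  rw [Finset.prod_sigma', Finset.prod_sigma']
  apply Finset.prod_bij
    (fun (p : Σ _ : Fin N, Fin N) _ => (⟨(p.2 : ℕ), (p.1 : ℕ)⟩ : Σ _ : ℕ, ℕ))
  · rintro ⟨a, b⟩ h
    simp only [Finset.mem_sigma, Finset.mem_univ, Finset.mem_Ioi, true_and] at h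
    simp only [Finset.mem_sigma, Finset.mem_range]
    exact ⟨b.isLt, h⟩
  · rintro ⟨a, b⟩ _ ⟨a', b'⟩ _ h
    have h1 : (b : ℕ) = (b' : ℕ) := congrArg Sigma.fst h
    have h2 : (a : ℕ) = (a' : ℕ) := congrArg Sigma.snd h
    have hb : b = b' := Fin.val_injective h1
    have ha : a = a' := Fin.val_injective h2
    subst ha; subst hb; rfl
  · rintro ⟨j, i⟩ hb
    simp only [Finset.mem_sigma, Finset.mem_range] at hb
    exact ⟨⟨⟨i, lt_trans hb.2 hb.1⟩, ⟨j, hb.1⟩⟩, by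
      simp [Finset.mem_sigma, Finset.mem_Ioi, Fin.lt_def, hb.2], rfl⟩
  · rintro ⟨a, b⟩ _
    rfl

lemma sum_range_cast_id (n : ℕ) :
    ∑ j ∈ Finset.range n, (j : ℝ) = n * (n - 1) / 2 := by
  induction n with
  | zero => simp
  | succ n ih => rw [Finset.sum_range_succ, ih]; push_cast; ring

lemma sum_range_cast_sq (n : ℕ) :
    ∑ j ∈ Finset.range n, (j : ℝ) ^ 2 = n * (n - 1) * (2 * n - 1) / 6 := by
  induction n with
  | zero => simp
  | succ n ih => rw [Finset.sum_range_succ, ih]; push_cast; ring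

lemma qvdm (c : ℝ) (n : ℕ) :
    ∏ j ∈ Finset.range n, ∏ i ∈ Finset.range j, (Real.exp (c * j) - Real.exp (c * i))
      = Real.exp (c * ∑ j ∈ Finset.range n, (j : ℝ) ^ 2) *
        ∏ k ∈ Finset.Icc 1 n, (1 - Real.exp (-(k : ℝ) * c)) ^ (n - k) := by
  induction n with
  | zero => simp
  | succ n ih =>
    rw [Finset.prod_range_succ, ih]
    have hnew : ∏ i ∈ Finset.range n, (Real.exp (c * n) - Real.exp (c * i))
        = Real.exp (c * (n : ℝ) ^ 2) * ∏ k ∈ Finset.Icc 1 n, (1 - Real.exp (-(k : ℝ) * c)) := by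
      have h1 : ∀ i ∈ Finset.range n, Real.exp (c * n) - Real.exp (c * i)
          = Real.exp (c * n) * (1 - Real.exp (-((n - i : ℕ) : ℝ) * c)) := by
        intro i hi
        rw [Finset.mem_range] at hi
        rw [Nat.cast_sub hi.le, mul_sub, mul_one, ← Real.exp_add]
        ring_nf
      rw [Finset.prod_congr rfl h1, Finset.prod_mul_distrib, Finset.prod_const,
        Finset.card_range, ← Real.exp_nat_mul]
      congr 1
      · congr 1; push_cast; ring
      · apply Finset.prod_nbij (fun i => n - i)
        · intro i hi; rw [Finset.mem_range] at hi
          rw [Finset.mem_Icc]; omega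
        · intro i hi j hj h
          rw [Finset.mem_coe, Finset.mem_range] at hi hj
          simp only at h; omega
        · intro k hk
          rw [Finset.mem_coe, Finset.mem_Icc] at hk
          exact ⟨n - k, by rw [Finset.mem_coe, Finset.mem_range]; omega, by
            simp only; omega⟩
        · intro i hi; rfl
    rw [hnew]
    have hR : ∏ k ∈ Finset.Icc 1 (n + 1), (1 - Real.exp (-(k : ℝ) * c)) ^ (n + 1 - k)
        = (∏ k ∈ Finset.Icc 1 n, (1 - Real.exp (-(k : ℝ) * c)) ^ (n - k)) *
          ∏ k ∈ Finset.Icc 1 n, (1 - Real.exp (-(k : ℝ) * c)) := by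
      rw [Finset.prod_Icc_succ_top (by omega : 1 ≤ n + 1)]
      rw [Nat.sub_self, pow_zero, mul_one, ← Finset.prod_mul_distrib]
      apply Finset.prod_congr rfl
      intro k hk
      rw [Finset.mem_Icc] at hk
      rw [← pow_succ]
      congr 1
      omega
    rw [hR, Finset.sum_range_succ]
    rw [mul_add, Real.exp_add]
    ring


lemma det_eq_sum_perm {N : ℕ} (M : Matrix (Fin N) (Fin N) ℝ) :
    M.det = ∑ r : Equiv.Perm (Fin N),
      ((Equiv.Perm.sign r : ℤ) : ℝ) * ∏ j, M j (r j) := by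
  rw [← Matrix.det_transpose, Matrix.det_apply]
  refine Finset.sum_congr rfl fun r _ => ?_
  simp [Units.smul_def, Matrix.transpose_apply]

lemma vandermonde_sq_expand {N : ℕ} (u : Fin N → ℝ) (W : ℝ → ℝ) :
    (∏ i, W (u i)) * ∏ i, ∏ j ∈ Finset.Ioi i, (u i - u j) ^ 2
      = ∑ p : Equiv.Perm (Fin N), ∑ q : Equiv.Perm (Fin N),
          ((Equiv.Perm.sign p : ℤ) : ℝ) * ((Equiv.Perm.sign q : ℤ) : ℝ) *
            ∏ i, (W (u i) * u i ^ ((p i : ℕ) + (q i : ℕ))) := by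
  have h1 : ∏ i, ∏ j ∈ Finset.Ioi i, (u i - u j) ^ 2
      = (Matrix.vandermonde u).det ^ 2 := by
    rw [Matrix.det_vandermonde, ← Finset.prod_pow]
    refine Finset.prod_congr rfl fun i _ => ?_
    rw [← Finset.prod_pow]
    exact Finset.prod_congr rfl fun j _ => by ring
  have h2 : (Matrix.vandermonde u).det
      = ∑ p : Equiv.Perm (Fin N), ((Equiv.Perm.sign p : ℤ) : ℝ) * ∏ i, u i ^ ((p i : ℕ)) := by
    rw [det_eq_sum_perm]
    exact Finset.sum_congr rfl fun p _ => by
      simp [Matrix.vandermonde_apply]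
  rw [h1, h2, sq, Finset.sum_mul_sum, Finset.mul_sum]
  refine Finset.sum_congr rfl fun p _ => ?_
  rw [Finset.mul_sum]
  refine Finset.sum_congr rfl fun q _ => ?_
  have hre : ∏ i, (W (u i) * u i ^ ((p i : ℕ) + (q i : ℕ)))
      = (∏ i, W (u i)) * ((∏ i, u i ^ ((p i : ℕ))) * (∏ i, u i ^ ((q i : ℕ)))) := by
    simp_rw [pow_add]
    rw [Finset.prod_mul_distrib, Finset.prod_mul_distrib]
  rw [hre]
  ring

lemma term_eval {N : ℕ} (σ : ℝ) (p q : Equiv.Perm (Fin N)) :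
    ∏ i : Fin N, (Real.sqrt (2 * π * σ ^ 2) *
        Real.exp (σ ^ 2 * ((((p i : ℕ) + (q i : ℕ) : ℕ) : ℝ) + 1) ^ 2 / 2))
      = Real.sqrt (2 * π * σ ^ 2) ^ N *
        Real.exp ((σ ^ 2 / 2) *
          (2 * ∑ i : Fin N, (((i : ℕ) : ℝ) ^ 2 + 2 * ((i : ℕ) : ℝ)) + N)) *
        ∏ i, (Matrix.vandermonde (fun i : Fin N => Real.exp (σ ^ 2 * ((i : ℕ) : ℝ)))) (p i) (q i) := by
  rw [Finset.prod_mul_distrib, Finset.prod_const, Finset.card_univ, Fintype.card_fin]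
  have hM : ∀ i, (Matrix.vandermonde (fun i : Fin N => Real.exp (σ ^ 2 * ((i : ℕ) : ℝ)))) (p i) (q i)
      = Real.exp (σ ^ 2 * ((p i : ℕ) : ℝ) * ((q i : ℕ) : ℝ)) := by
    intro i
    rw [Matrix.vandermonde_apply, ← Real.exp_nat_mul]
    ring_nf
  rw [Finset.prod_congr rfl fun i _ => hM i, ← Real.exp_sum, ← Real.exp_sum]
  have hsplit : ∀ i : Fin N, σ ^ 2 * (((((p i : ℕ) + (q i : ℕ) : ℕ)) : ℝ) + 1) ^ 2 / 2
      = (σ ^ 2 / 2) * ((((p i : ℕ) : ℝ) ^ 2 + 2 * ((p i : ℕ) : ℝ))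
        + (((q i : ℕ) : ℝ) ^ 2 + 2 * ((q i : ℕ) : ℝ)) + 1)
        + σ ^ 2 * ((p i : ℕ) : ℝ) * ((q i : ℕ) : ℝ) := by
    intro i; push_cast; ring
  have hsum : (∑ x : Fin N, σ ^ 2 * ((((p x : ℕ) + (q x : ℕ) : ℕ) : ℝ) + 1) ^ 2 / 2)
      = (σ ^ 2 / 2) * (2 * ∑ i : Fin N, (((i : ℕ) : ℝ) ^ 2 + 2 * ((i : ℕ) : ℝ)) + N)
        + ∑ x : Fin N, σ ^ 2 * ((p x : ℕ) : ℝ) * ((q x : ℕ) : ℝ) := by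
    rw [Finset.sum_congr rfl fun i _ => hsplit i, Finset.sum_add_distrib, ← Finset.mul_sum,
      Finset.sum_add_distrib, Finset.sum_add_distrib, Finset.sum_const, Finset.card_univ,
      Fintype.card_fin,
      Equiv.sum_comp p (fun i : Fin N => ((i : ℕ) : ℝ) ^ 2 + 2 * ((i : ℕ) : ℝ)),
      Equiv.sum_comp q (fun i : Fin N => ((i : ℕ) : ℝ) ^ 2 + 2 * ((i : ℕ) : ℝ))]
    push_cast
    ring
  rw [hsum, Real.exp_add, mul_assoc]
  ring
/-- Exact closed form of the β = 2 Stieltjes–Wigert partition-function integral: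
for every `N ≥ 1` and `σ > 0`,
`∫_{(0,∞)^N} ∏ᵢ exp(−(log uᵢ)²/(2σ²)) · ∏_{i<j} (uᵢ − uⱼ)² du =
  N! · (2πσ²)^{N/2} · exp(σ²(4N³ − N)/6) · ∏_{k=1}^{N−1} (1 − e^{−kσ²})^{N−k}`. -/
theorem stieltjes_wigert_beta_two_closed_form (N : ℕ) (hN : 1 ≤ N) (σ : ℝ) (hσ : 0 < σ) :
    (∫ u : Fin N → ℝ in Set.univ.pi (fun _ => Set.Ioi (0 : ℝ)),
        (∏ i, Real.exp (-(Real.log (u i)) ^ 2 / (2 * σ ^ 2))) *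
          ∏ i, ∏ j ∈ Finset.Ioi i, (u i - u j) ^ 2)
      = (N.factorial : ℝ) * (2 * Real.pi * σ ^ 2) ^ ((N : ℝ) / 2) *
          Real.exp (σ ^ 2 * (4 * (N : ℝ) ^ 3 - (N : ℝ)) / 6) *
          ∏ k ∈ Finset.Icc 1 (N - 1), (1 - Real.exp (-(k : ℝ) * σ ^ 2)) ^ (N - k) := by
  classical
  set W : ℝ → ℝ := fun t => Real.exp (-(Real.log t) ^ 2 / (2 * σ ^ 2)) with hW
  set G : ℕ → ℝ → ℝ := fun m => (Set.Ioi (0 : ℝ)).indicator (fun t => W t * t ^ m) with hG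
  have hGint : ∀ m, Integrable (G m) := fun m =>
    (sw_one_dim_integrable hσ m).integrable_indicator measurableSet_Ioi
  have hGval : ∀ m : ℕ, (∫ t, G m t)
      = Real.sqrt (2 * π * σ ^ 2) * Real.exp (σ ^ 2 * ((m : ℝ) + 1) ^ 2 / 2) := fun m => by
    rw [hG]
    simp only
    rw [integral_indicator measurableSet_Ioi]
    exact sw_one_dim hσ m
  have hS : MeasurableSet (Set.univ.pi fun _ : Fin N => Set.Ioi (0 : ℝ)) :=
    MeasurableSet.univ_pi fun _ => measurableSet_Ioi
  rw [← integral_indicator hS]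
  have hpoint : ∀ u : Fin N → ℝ,
      (Set.univ.pi fun _ : Fin N => Set.Ioi (0 : ℝ)).indicator
        (fun u => (∏ i, Real.exp (-(Real.log (u i)) ^ 2 / (2 * σ ^ 2))) *
          ∏ i, ∏ j ∈ Finset.Ioi i, (u i - u j) ^ 2) u
      = ∑ p : Equiv.Perm (Fin N), ∑ q : Equiv.Perm (Fin N),
          ((Equiv.Perm.sign p : ℤ) : ℝ) * ((Equiv.Perm.sign q : ℤ) : ℝ) *
            ∏ i, G ((p i : ℕ) + (q i : ℕ)) (u i) := by
    intro u
    by_cases hu : u ∈ Set.univ.pi fun _ : Fin N => Set.Ioi (0 : ℝ)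
    · rw [Set.indicator_of_mem hu]
      have hmem : ∀ i, u i ∈ Set.Ioi (0 : ℝ) := fun i => hu i (Set.mem_univ i)
      have hGu : ∀ (m : ℕ) (i : Fin N), G m (u i) = W (u i) * u i ^ m := fun m i => by
        rw [hG]; exact Set.indicator_of_mem (hmem i) _
      simp_rw [hGu]
      exact vandermonde_sq_expand u W
    · rw [Set.indicator_of_notMem hu]
      symm
      refine Finset.sum_eq_zero fun p _ => Finset.sum_eq_zero fun q _ => ?_
      obtain ⟨i₀, _, hi₀⟩ : ∃ i ∈ Set.univ, u i ∉ Set.Ioi (0 : ℝ) := by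
        by_contra h
        push_neg at h
        exact hu fun i _ => h i (Set.mem_univ i)
      rw [Finset.prod_eq_zero (Finset.mem_univ i₀) (by
        rw [hG]; exact Set.indicator_of_notMem hi₀ _), mul_zero]
  rw [show ((Set.univ.pi fun _ : Fin N => Set.Ioi (0 : ℝ)).indicator
      (fun u => (∏ i, Real.exp (-(Real.log (u i)) ^ 2 / (2 * σ ^ 2))) *
        ∏ i, ∏ j ∈ Finset.Ioi i, (u i - u j) ^ 2))
    = fun u => ∑ p : Equiv.Perm (Fin N), ∑ q : Equiv.Perm (Fin N),
        ((Equiv.Perm.sign p : ℤ) : ℝ) * ((Equiv.Perm.sign q : ℤ) : ℝ) *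
          ∏ i, G ((p i : ℕ) + (q i : ℕ)) (u i) from funext hpoint]
  have hint : ∀ p q : Equiv.Perm (Fin N),
      Integrable (fun u : Fin N → ℝ =>
        ((Equiv.Perm.sign p : ℤ) : ℝ) * ((Equiv.Perm.sign q : ℤ) : ℝ) *
          ∏ i, G ((p i : ℕ) + (q i : ℕ)) (u i)) := fun p q =>
    (Integrable.fintype_prod (𝕜 := ℝ) fun i => hGint ((p i : ℕ) + (q i : ℕ))).const_mul _
  rw [integral_finset_sum _ fun p _ => integrable_finset_sum _ fun q _ => hint p q]
  simp_rw [integral_finset_sum _ fun q _ => hint _ q, integral_const_mul,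
    MeasureTheory.integral_fintype_prod_volume_eq_prod, hGval, term_eval σ]
  -- pull out constants
  have hpull : ∀ p q : Equiv.Perm (Fin N),
      ((Equiv.Perm.sign p : ℤ) : ℝ) * ((Equiv.Perm.sign q : ℤ) : ℝ) *
        (Real.sqrt (2 * π * σ ^ 2) ^ N *
          Real.exp ((σ ^ 2 / 2) *
            (2 * ∑ i : Fin N, (((i : ℕ) : ℝ) ^ 2 + 2 * ((i : ℕ) : ℝ)) + N)) *
          ∏ i, (Matrix.vandermonde (fun i : Fin N => Real.exp (σ ^ 2 * ((i : ℕ) : ℝ)))) (p i) (q i))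
      = (Real.sqrt (2 * π * σ ^ 2) ^ N *
          Real.exp ((σ ^ 2 / 2) *
            (2 * ∑ i : Fin N, (((i : ℕ) : ℝ) ^ 2 + 2 * ((i : ℕ) : ℝ)) + N))) *
        (((Equiv.Perm.sign p : ℤ) : ℝ) * ((Equiv.Perm.sign q : ℤ) : ℝ) *
          ∏ i, (Matrix.vandermonde (fun i : Fin N => Real.exp (σ ^ 2 * ((i : ℕ) : ℝ)))) (p i) (q i)) := by
    intro p q; ring
  simp_rw [hpull, ← Finset.mul_sum]
  rw [sum_perm_pairs, Matrix.det_vandermonde]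
  -- reduce the double product over Fin pairs to range form and apply qvdm
  have hpairs : (∏ i : Fin N, ∏ j ∈ Finset.Ioi i,
        (Real.exp (σ ^ 2 * ((j : ℕ) : ℝ)) - Real.exp (σ ^ 2 * ((i : ℕ) : ℝ))))
      = ∏ j ∈ Finset.range N, ∏ i ∈ Finset.range j,
          (Real.exp (σ ^ 2 * (j : ℝ)) - Real.exp (σ ^ 2 * (i : ℝ))) :=
    prod_pairs_fin (fun a b => Real.exp (σ ^ 2 * (b : ℝ)) - Real.exp (σ ^ 2 * (a : ℝ)))
  rw [hpairs, qvdm (σ ^ 2) N]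
  -- now pure algebra
  have hK : (∑ i : Fin N, (((i : ℕ) : ℝ) ^ 2 + 2 * ((i : ℕ) : ℝ)))
      = (N : ℝ) * ((N : ℝ) - 1) * (2 * (N : ℝ) - 1) / 6 + 2 * ((N : ℝ) * ((N : ℝ) - 1) / 2) := by
    rw [Fin.sum_univ_eq_sum_range (fun j => (j : ℝ) ^ 2 + 2 * (j : ℝ)) N,
      Finset.sum_add_distrib, ← Finset.mul_sum, sum_range_cast_sq, sum_range_cast_id]
  have hS2 : (∑ j ∈ Finset.range N, (j : ℝ) ^ 2)
      = (N : ℝ) * ((N : ℝ) - 1) * (2 * (N : ℝ) - 1) / 6 := sum_range_cast_sq N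
  have hC : Real.sqrt (2 * π * σ ^ 2) ^ N = (2 * π * σ ^ 2) ^ ((N : ℝ) / 2) := by
    rw [Real.sqrt_eq_rpow, ← Real.rpow_natCast ((2 * π * σ ^ 2) ^ ((1 : ℝ) / 2)) N,
      ← Real.rpow_mul (by positivity)]
    congr 1
    ring
  have hIcc : (∏ k ∈ Finset.Icc 1 N, (1 - Real.exp (-(k : ℝ) * σ ^ 2)) ^ (N - k))
      = ∏ k ∈ Finset.Icc 1 (N - 1), (1 - Real.exp (-(k : ℝ) * σ ^ 2)) ^ (N - k) := by
    rw [show N = (N - 1) + 1 by omega, Finset.prod_Icc_succ_top (by omega)]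
    rw [show (N - 1 + 1) - (N - 1 + 1) = 0 by omega, pow_zero, mul_one, Nat.add_sub_cancel]
  rw [hK, hS2, hC, hIcc]
  have hexp2 : Real.exp (σ ^ 2 / 2 * (2 * ((N : ℝ) * ((N : ℝ) - 1) * (2 * (N : ℝ) - 1) / 6
        + 2 * ((N : ℝ) * ((N : ℝ) - 1) / 2)) + (N : ℝ))) *
      Real.exp (σ ^ 2 * ((N : ℝ) * ((N : ℝ) - 1) * (2 * (N : ℝ) - 1) / 6))
      = Real.exp (σ ^ 2 * (4 * (N : ℝ) ^ 3 - (N : ℝ)) / 6) := by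
    rw [← Real.exp_add]; congr 1; ring
  rw [← hexp2]
  ring
end

section
/- For every integer N ≥ 1, every β > 0 and every σ > 0, the integral ∫_{(0,∞)^N} ∏_{i=1}^N exp(−(log u_i)²/(2σ²)) · ∏_{1≤i<j≤N} |u_i − u_j|^β du₁…du_N is finite. -/
open MeasureTheory Real Set

set_option maxHeartbeats 1000000

/-- The 1D dominating function is integrable on `(0,∞)`. -/
lemma sw_aux_integrableOn_Ioi (σ c : ℝ) (hσ : 0 < σ) (hc : 0 ≤ c) :
    IntegrableOn (fun t : ℝ => Real.exp (-(Real.log t) ^ 2 / (2 * σ ^ 2)) * (1 + |t|) ^ c)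
      (Ioi (0 : ℝ)) := by
  have hmeas : Measurable fun t : ℝ =>
      Real.exp (-(Real.log t) ^ 2 / (2 * σ ^ 2)) * (1 + |t|) ^ c := by
    exact (((Real.measurable_log.pow_const 2).neg.div_const _).exp).mul
      ((measurable_const.add measurable_abs).pow measurable_const)
  have h01 : IntegrableOn (fun t : ℝ =>
      Real.exp (-(Real.log t) ^ 2 / (2 * σ ^ 2)) * (1 + |t|) ^ c) (Ioc (0:ℝ) 1) := by
    have hconst : IntegrableOn (fun _ : ℝ => (2:ℝ) ^ c) (Ioc (0:ℝ) 1) :=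
      integrableOn_const measure_Ioc_lt_top.ne
    apply Integrable.mono' hconst
    · exact hmeas.aestronglyMeasurable
    · filter_upwards [ae_restrict_mem measurableSet_Ioc] with t ht
      have h1 : Real.exp (-(Real.log t) ^ 2 / (2 * σ ^ 2)) ≤ 1 := by
        apply Real.exp_le_one_iff.2
        apply div_nonpos_of_nonpos_of_nonneg
        · simpa using sq_nonneg (Real.log t)
        · positivity
      have h2 : (1 + |t|) ^ c ≤ (2:ℝ) ^ c := by
        apply Real.rpow_le_rpow (by positivity) _ hc
        rw [abs_of_pos ht.1]; linarith [ht.2]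
      have h3 : (0:ℝ) ≤ (1 + |t|) ^ c := by positivity
      rw [Real.norm_eq_abs, abs_of_nonneg (by positivity)]
      calc Real.exp (-(Real.log t) ^ 2 / (2 * σ ^ 2)) * (1 + |t|) ^ c
          ≤ 1 * ((2:ℝ) ^ c) := mul_le_mul h1 h2 h3 one_pos.le
        _ = (2:ℝ) ^ c := one_mul _
  have h1i : IntegrableOn (fun t : ℝ =>
      Real.exp (-(Real.log t) ^ 2 / (2 * σ ^ 2)) * (1 + |t|) ^ c) (Ioi (1:ℝ)) := by
    set K : ℝ := (c + 2) ^ 2 * σ ^ 2 / 2 with hK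
    apply Integrable.mono'
      (((integrableOn_Ioi_rpow_of_lt (by norm_num : (-2:ℝ) < -1) one_pos).const_mul
        ((2:ℝ) ^ c * Real.exp K)))
    · exact hmeas.aestronglyMeasurable
    · filter_upwards [ae_restrict_mem measurableSet_Ioi] with t ht
      have ht0 : (0:ℝ) < t := lt_trans one_pos ht
      have hs : 0 ≤ Real.log t := Real.log_nonneg ht.le
      set s : ℝ := Real.log t with hsdef
      have habs : |t| = t := abs_of_pos ht0
      have h2 : (1 + |t|) ^ c ≤ (2*t) ^ c := by
        apply Real.rpow_le_rpow (by positivity) _ hc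
        rw [habs]; linarith [mem_Ioi.mp ht]
      have h2t : (2*t) ^ c = 2 ^ c * t ^ c := Real.mul_rpow (by norm_num) ht0.le
      have htc : t ^ c = Real.exp (c * s) := by
        rw [Real.rpow_def_of_pos ht0, mul_comm]
      have hquad : -s ^ 2 / (2 * σ ^ 2) + c * s ≤ K - 2 * s := by
        rw [hK]
        have hid : -s ^ 2 / (2 * σ ^ 2) + c * s - ((c + 2) ^ 2 * σ ^ 2 / 2 - 2 * s)
            = -((s - (c + 2) * σ ^ 2) ^ 2 / (2 * σ ^ 2)) := by
          field_simp
          ring_nf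
        have hpos : 0 ≤ (s - (c + 2) * σ ^ 2) ^ 2 / (2 * σ ^ 2) := by positivity
        linarith
      have hneg2 : Real.exp (-(2:ℝ) * s) = t ^ (-2:ℝ) := by
        rw [Real.rpow_def_of_pos ht0, mul_comm]
      rw [Real.norm_eq_abs, abs_of_nonneg (by positivity)]
      calc Real.exp (-s ^ 2 / (2 * σ ^ 2)) * (1 + |t|) ^ c
          ≤ Real.exp (-s ^ 2 / (2 * σ ^ 2)) * (2 ^ c * Real.exp (c * s)) := by
            rw [← htc, ← h2t]
            exact mul_le_mul_of_nonneg_left h2 (Real.exp_pos _).le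
        _ = 2 ^ c * Real.exp (-s ^ 2 / (2 * σ ^ 2) + c * s) := by
            rw [Real.exp_add]; ring
        _ ≤ 2 ^ c * Real.exp (K - 2 * s) := by
            exact mul_le_mul_of_nonneg_left (Real.exp_le_exp.2 hquad) (by positivity)
        _ = 2 ^ c * Real.exp K * t ^ (-2:ℝ) := by
            rw [sub_eq_add_neg, Real.exp_add, ← hneg2]; ring
  have := h01.union h1i
  rwa [Ioc_union_Ioi_eq_Ioi zero_le_one] at this

/-- The 1D dominating function is integrable on all of `ℝ`. -/
lemma sw_aux_integrable (σ c : ℝ) (hσ : 0 < σ) (hc : 0 ≤ c) :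
    Integrable (fun t : ℝ => Real.exp (-(Real.log t) ^ 2 / (2 * σ ^ 2)) * (1 + |t|) ^ c) := by
  have hmeas : Measurable fun t : ℝ =>
      Real.exp (-(Real.log t) ^ 2 / (2 * σ ^ 2)) * (1 + |t|) ^ c :=
    (((Real.measurable_log.pow_const 2).neg.div_const _).exp).mul
      ((measurable_const.add measurable_abs).pow measurable_const)
  rw [← integrableOn_univ, ← @Iio_union_Ici _ _ (0 : ℝ), integrableOn_union,
    integrableOn_Ici_iff_integrableOn_Ioi]
  refine ⟨?_, sw_aux_integrableOn_Ioi σ c hσ hc⟩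
  rw [← (Measure.measurePreserving_neg (volume : Measure ℝ)).integrableOn_comp_preimage
      (Homeomorph.neg ℝ).measurableEmbedding]
  simp only [Function.comp_def, Real.log_neg_eq_log, abs_neg, neg_preimage, neg_Iio, neg_neg,
    neg_zero]
  exact sw_aux_integrableOn_Ioi σ c hσ hc

/-- Finiteness of the Stieltjes–Wigert partition-function integral for any Dyson index β > 0:
`∫_{(0,∞)^N} ∏ᵢ exp(−(log uᵢ)²/(2σ²)) · ∏_{i<j} |uᵢ − uⱼ|^β du < ∞`. -/
theorem stieltjes_wigert_integrable (N : ℕ) (hN : 1 ≤ N) (β : ℝ) (hβ : 0 < β)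
    (σ : ℝ) (hσ : 0 < σ) :
    MeasureTheory.IntegrableOn
      (fun u : Fin N → ℝ =>
        (∏ i, Real.exp (-(Real.log (u i)) ^ 2 / (2 * σ ^ 2))) *
          ∏ i, ∏ j ∈ Finset.Ioi i, |u i - u j| ^ β)
      (Set.univ.pi fun _ => Set.Ioi (0 : ℝ)) := by
  set c : ℝ := β * (N : ℝ) ^ 2 with hc
  have hc0 : 0 ≤ c := by positivity
  set g : ℝ → ℝ := fun t => Real.exp (-(Real.log t) ^ 2 / (2 * σ ^ 2)) * (1 + |t|) ^ c
    with hgdef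
  have hg : Integrable g := sw_aux_integrable σ c hσ hc0
  have hG : Integrable (fun u : Fin N → ℝ => ∏ i, g (u i)) :=
    Integrable.fintype_prod (fun _ => hg)
  have hFm : Measurable (fun u : Fin N → ℝ =>
      (∏ i, Real.exp (-(Real.log (u i)) ^ 2 / (2 * σ ^ 2))) *
        ∏ i, ∏ j ∈ Finset.Ioi i, |u i - u j| ^ β) := by
    apply Measurable.mul
    · exact Finset.measurable_prod _ fun i _ =>
        (((measurable_pi_apply i).log.pow_const 2).neg.div_const _).exp
    · exact Finset.measurable_prod _ fun i _ => Finset.measurable_prod _ fun j _ =>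
        (((measurable_pi_apply i).sub (measurable_pi_apply j)).abs.pow measurable_const)
  apply Integrable.mono' hG.integrableOn hFm.aestronglyMeasurable
  filter_upwards [ae_restrict_mem (MeasurableSet.univ_pi fun _ => measurableSet_Ioi)] with u hu
  have hu' : ∀ i, 0 < u i := fun i => hu i (Set.mem_univ i)
  set P : ℝ := ∏ i, (1 + u i) with hP
  have oneLe : ∀ s : Finset (Fin N), 1 ≤ ∏ k ∈ s, (1 + u k) := by
    intro s
    calc (1:ℝ) = ∏ _k ∈ s, (1:ℝ) := by simp
      _ ≤ ∏ k ∈ s, (1 + u k) :=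
        Finset.prod_le_prod (fun _ _ => zero_le_one) (fun k _ => by linarith [hu' k])
  have hP1 : 1 ≤ P := by rw [hP]; exact oneLe Finset.univ
  have hP0 : 0 ≤ P := le_trans zero_le_one hP1
  -- each pair factor is bounded by P
  have key : ∀ i j : Fin N, i ≠ j → |u i - u j| ≤ P := by
    intro i j hij
    have h1 : |u i - u j| ≤ u i + u j :=
      abs_le.2 ⟨by linarith [hu' i, hu' j], by linarith [hu' i, hu' j]⟩
    have h2 : u i + u j ≤ (1 + u i) * (1 + u j) := by nlinarith [hu' i, hu' j]
    have h3 : (1 + u i) * (1 + u j) ≤ P := by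
      rw [hP, ← Finset.prod_sdiff (Finset.subset_univ ({i, j} : Finset (Fin N))),
        Finset.prod_pair hij]
      exact le_mul_of_one_le_left (by nlinarith [hu' i, hu' j]) (oneLe _)
    linarith
  -- bound the Vandermonde part
  set K : ℕ := ∑ i : Fin N, (Finset.Ioi i).card with hKdef
  have hBound : (∏ i, ∏ j ∈ Finset.Ioi i, |u i - u j| ^ β) ≤ ∏ i, (1 + u i) ^ c := by
    have step1 : (∏ i, ∏ j ∈ Finset.Ioi i, |u i - u j| ^ β)
        ≤ ∏ i : Fin N, ∏ j ∈ Finset.Ioi i, P ^ β := by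
      apply Finset.prod_le_prod
      · intro i _
        exact Finset.prod_nonneg fun j _ => Real.rpow_nonneg (abs_nonneg _) _
      · intro i _
        apply Finset.prod_le_prod (fun j _ => Real.rpow_nonneg (abs_nonneg _) _)
        intro j hj
        exact Real.rpow_le_rpow (abs_nonneg _)
          (key i j (Fin.ne_of_lt (Finset.mem_Ioi.mp hj))) hβ.le
    have step2 : (∏ i : Fin N, ∏ j ∈ Finset.Ioi i, P ^ β) = (P ^ β) ^ K := by
      simp_rw [Finset.prod_const]
      rw [hKdef, Finset.prod_pow_eq_pow_sum]
    have step3 : (P ^ β) ^ K = P ^ (β * (K : ℝ)) := by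
      rw [← Real.rpow_natCast (P ^ β) K, ← Real.rpow_mul hP0]
    have hKle : (K : ℝ) ≤ (N : ℝ) ^ 2 := by
      have : K ≤ N * N := by
        calc K ≤ ∑ _i : Fin N, N := by
              apply Finset.sum_le_sum
              intro i _
              simpa using Finset.card_le_univ (Finset.Ioi i)
          _ = N * N := by simp [Finset.sum_const, mul_comm]
      calc (K : ℝ) ≤ (N : ℝ) * N := by exact_mod_cast this
        _ = (N : ℝ) ^ 2 := by ring
    have step4 : P ^ (β * (K : ℝ)) ≤ P ^ c := by
      apply Real.rpow_le_rpow_of_exponent_le hP1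
      rw [hc]
      exact mul_le_mul_of_nonneg_left hKle hβ.le
    have step5 : P ^ c = ∏ i, (1 + u i) ^ c := by
      rw [hP, ← Real.finset_prod_rpow _ _ (fun i _ => by linarith [hu' i]) c]
    calc (∏ i, ∏ j ∈ Finset.Ioi i, |u i - u j| ^ β) ≤ (P ^ β) ^ K := by
          rw [← step2]; exact step1
      _ = P ^ (β * (K : ℝ)) := step3
      _ ≤ P ^ c := step4
      _ = ∏ i, (1 + u i) ^ c := step5
  -- assemble
  have hA0 : 0 ≤ ∏ i, Real.exp (-(Real.log (u i)) ^ 2 / (2 * σ ^ 2)) :=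
    Finset.prod_nonneg fun i _ => (Real.exp_pos _).le
  have hB0 : 0 ≤ ∏ i, ∏ j ∈ Finset.Ioi i, |u i - u j| ^ β :=
    Finset.prod_nonneg fun i _ =>
      Finset.prod_nonneg fun j _ => Real.rpow_nonneg (abs_nonneg _) _
  rw [Real.norm_eq_abs, abs_of_nonneg (mul_nonneg hA0 hB0)]
  calc (∏ i, Real.exp (-(Real.log (u i)) ^ 2 / (2 * σ ^ 2))) *
        ∏ i, ∏ j ∈ Finset.Ioi i, |u i - u j| ^ β
      ≤ (∏ i, Real.exp (-(Real.log (u i)) ^ 2 / (2 * σ ^ 2))) * ∏ i, (1 + u i) ^ c :=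
        mul_le_mul_of_nonneg_left hBound hA0
    _ = ∏ i, g (u i) := by
        rw [← Finset.prod_mul_distrib]
        exact Finset.prod_congr rfl fun i _ => by
          rw [hgdef]; simp [abs_of_pos (hu' i)]
end

section
/- For every t > 0, ∫_0^1 (1 − x) · log(1 − e^{−tx}) dx = −π²/(6t) + (ζ(3) − Li₃(e^{−t}))/t², where Li₃(x) = Σ_{k=1}^∞ x^k/k³ and ζ(3) = Σ_{k=1}^∞ 1/k³. -/
open Real MeasureTheory intervalIntegral

lemma aux_integral_exp_neg (a : ℝ) (ha : 0 < a) :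
    ∫ x in (0:ℝ)..1, Real.exp (-(a * x)) = (1 - Real.exp (-a)) / a := by
  have h : ∀ x ∈ Set.uIcc (0:ℝ) 1, HasDerivAt (fun x => -Real.exp (-(a * x)) / a)
      (Real.exp (-(a * x))) x := by
    intro x _
    have h1 : HasDerivAt (fun x : ℝ => -(a * x)) (-a) x := by
      simpa using ((hasDerivAt_id x).const_mul (-a))
    have h2 := (Real.hasDerivAt_exp (-(a * x))).comp x h1
    have h3 := (h2.neg).div_const a
    refine h3.congr_deriv ?_
    field_simp
  rw [intervalIntegral.integral_eq_sub_of_hasDerivAt h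
    ((Real.continuous_exp.comp (by continuity)).intervalIntegrable 0 1)]
  field_simp
  rw [mul_zero, neg_zero, Real.exp_zero]
  ring

lemma aux_integral_one_sub_mul_exp (a : ℝ) (ha : 0 < a) :
    ∫ x in (0:ℝ)..1, (1 - x) * Real.exp (-(a * x))
      = (a - 1 + Real.exp (-a)) / a ^ 2 := by
  have h : ∀ x ∈ Set.uIcc (0:ℝ) 1, HasDerivAt
      (fun x => Real.exp (-(a * x)) * (a * x + 1 - a) / a ^ 2)
      ((1 - x) * Real.exp (-(a * x))) x := by
    intro x _
    have h1 : HasDerivAt (fun x : ℝ => -(a * x)) (-a) x := by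
      simpa using ((hasDerivAt_id x).const_mul (-a))
    have h2 := (Real.hasDerivAt_exp (-(a * x))).comp x h1
    have h3 : HasDerivAt (fun x : ℝ => a * x + 1 - a) a x := by
      simpa [add_sub_assoc] using ((hasDerivAt_id x).const_mul a).add_const (1 - a)
    have h4 := (h2.mul h3).div_const (a ^ 2)
    refine h4.congr_deriv ?_
    field_simp
    simp only [Function.comp]
    ring
  rw [intervalIntegral.integral_eq_sub_of_hasDerivAt h
    (((continuous_const.sub continuous_id).mul
      (Real.continuous_exp.comp (by continuity))).intervalIntegrable 0 1)]
  simp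
  field_simp
  ring

/-- Integral evaluation producing the trilogarithm term: for every `t > 0`,
`∫_0^1 (1 − x) log(1 − e^{−tx}) dx = −π²/(6t) + (ζ(3) − Li₃(e^{−t}))/t²`. -/
theorem integral_log_one_sub_exp (t : ℝ) (ht : 0 < t) :
    ∫ x in (0 : ℝ)..1, (1 - x) * Real.log (1 - Real.exp (-t * x))
      = -Real.pi ^ 2 / (6 * t) +
        ((∑' k : ℕ, 1 / ((k : ℝ) + 1) ^ 3) -
            ∑' k : ℕ, (Real.exp (-t)) ^ (k + 1) / ((k : ℝ) + 1) ^ 3) / t ^ 2 := by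
  set F : ℕ → ℝ → ℝ := fun n x => -((1 - x) * Real.exp (-(((n : ℝ) + 1) * t * x)) / ((n : ℝ) + 1))
    with hF
  have hn1 : ∀ n : ℕ, (0:ℝ) < (n : ℝ) + 1 := fun n => by positivity
  have ha : ∀ n : ℕ, (0:ℝ) < ((n : ℝ) + 1) * t := fun n => by positivity
  have hcont : ∀ n : ℕ, Continuous (F n) := by
    intro n
    apply Continuous.neg
    apply Continuous.div_const
    exact (continuous_const.sub continuous_id).mul (Real.continuous_exp.comp (by continuity))
  have hF_int : ∀ n : ℕ, Integrable (F n) (volume.restrict (Set.Ioc (0:ℝ) 1)) :=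
    fun n => (hcont n).integrableOn_Ioc
  have hS2 : HasSum (fun n : ℕ => 1 / ((n : ℝ) + 1) ^ 2) (π ^ 2 / 6) := by
    have h := (hasSum_nat_add_iff' (f := fun n : ℕ => (1:ℝ) / (n:ℝ) ^ 2) 1).mpr hasSum_zeta_two
    simpa using h
  -- bound the norm integrals
  have hnorm_int : ∀ n : ℕ, ∫ x in Set.Ioc (0:ℝ) 1, ‖F n x‖ ≤ 1 / (t * ((n : ℝ) + 1) ^ 2) := by
    intro n
    have hb : ∀ x ∈ Set.Ioc (0:ℝ) 1, ‖F n x‖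
        ≤ Real.exp (-(((n : ℝ) + 1) * t * x)) / ((n : ℝ) + 1) := by
      intro x hx
      have hx0 : 0 < x := hx.1
      have hx1 : x ≤ 1 := hx.2
      rw [hF]
      simp only [norm_neg, Real.norm_eq_abs]
      have h1x : (0:ℝ) ≤ 1 - x := by linarith
      rw [abs_of_nonneg (by positivity)]
      have hle : (1 - x) * Real.exp (-(((n : ℝ) + 1) * t * x))
          ≤ Real.exp (-(((n : ℝ) + 1) * t * x)) := by
        nlinarith [Real.exp_pos (-(((n : ℝ) + 1) * t * x))]
      have := mul_le_mul_of_nonneg_right hle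
        (by positivity : (0:ℝ) ≤ (((n:ℝ) + 1))⁻¹)
      simpa [div_eq_mul_inv] using this
    have hInt1 : IntegrableOn (fun x => ‖F n x‖) (Set.Ioc (0:ℝ) 1) :=
      ((hcont n).norm).integrableOn_Ioc
    have hInt2 : IntegrableOn (fun x => Real.exp (-(((n : ℝ) + 1) * t * x)) / ((n : ℝ) + 1))
        (Set.Ioc (0:ℝ) 1) :=
      ((Real.continuous_exp.comp (by continuity)).div_const _).integrableOn_Ioc
    refine (setIntegral_mono_on hInt1 hInt2 measurableSet_Ioc hb).trans ?_
    have hcalc : ∫ x in Set.Ioc (0:ℝ) 1, Real.exp (-(((n : ℝ) + 1) * t * x)) / ((n : ℝ) + 1)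
        = ((1 - Real.exp (-(((n : ℝ) + 1) * t))) / (((n : ℝ) + 1) * t)) / ((n : ℝ) + 1) := by
      rw [← intervalIntegral.integral_of_le zero_le_one,
        intervalIntegral.integral_div, aux_integral_exp_neg _ (ha n)]
    rw [hcalc, div_div, div_le_div_iff₀ (by positivity) (by positivity)]
    have he : (0:ℝ) < Real.exp (-(((n : ℝ) + 1) * t)) := Real.exp_pos _
    nlinarith [mul_pos ht (mul_pos (hn1 n) (hn1 n)),
      mul_nonneg he.le (by positivity : (0:ℝ) ≤ t * ((n:ℝ) + 1) ^ 2)]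
  have hF_sum : Summable fun n : ℕ => ∫ x in Set.Ioc (0:ℝ) 1, ‖F n x‖ := by
    apply Summable.of_nonneg_of_le (fun n => integral_nonneg fun x => norm_nonneg _) hnorm_int
    have h := hS2.summable.mul_left (1 / t)
    apply h.congr
    intro n
    field_simp
  have hkey := MeasureTheory.hasSum_integral_of_summable_integral_norm hF_int hF_sum
  -- identify the pointwise sum
  have htsum_eq : Set.EqOn (fun x => ∑' n : ℕ, F n x)
      (fun x => (1 - x) * Real.log (1 - Real.exp (-t * x))) (Set.Ioc (0:ℝ) 1) := by
    intro x hx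
    have hy : |Real.exp (-t * x)| < 1 := by
      rw [abs_of_pos (Real.exp_pos _)]
      apply Real.exp_lt_one_iff.mpr
      nlinarith [hx.1]
    have h3 : HasSum (fun n : ℕ => F n x)
        ((1 - x) * Real.log (1 - Real.exp (-t * x))) := by
      have h2 := (hasSum_pow_div_log_of_abs_lt_one hy).mul_left (-(1 - x))
      convert h2 using 1
      · rfl
      · funext n
        rw [hF]
        have : Real.exp (-t * x) ^ (n + 1) = Real.exp (-(((n : ℝ) + 1) * t * x)) := by
          rw [← Real.exp_nat_mul]
          push_cast
          ring_nf
        rw [this]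
        ring
      · ring
    exact h3.tsum_eq
  -- evaluate each term integral
  have hint_eval : ∀ n : ℕ, ∫ x in Set.Ioc (0:ℝ) 1, F n x
      = -((((n : ℝ) + 1) * t - 1 + Real.exp (-(((n : ℝ) + 1) * t)))
          / ((((n : ℝ) + 1) * t) ^ 2) / ((n : ℝ) + 1)) := by
    intro n
    rw [← intervalIntegral.integral_of_le zero_le_one]
    have : ∫ x in (0:ℝ)..1, F n x
        = -((∫ x in (0:ℝ)..1, (1 - x) * Real.exp (-(((n : ℝ) + 1) * t * x))) / ((n : ℝ) + 1)) := by
      rw [← intervalIntegral.integral_div, ← intervalIntegral.integral_neg]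
    rw [this]
    have := aux_integral_one_sub_mul_exp (((n : ℝ) + 1) * t) (ha n)
    simp only [mul_assoc] at this ⊢
    rw [this]
  -- summability of the component series
  have hS3 : Summable (fun n : ℕ => 1 / ((n : ℝ) + 1) ^ 3) := by
    apply Summable.of_nonneg_of_le (fun n => by positivity) _ hS2.summable
    intro n
    apply div_le_div_of_nonneg_left one_pos.le (by positivity)
    have h1 : (1:ℝ) ≤ (n : ℝ) + 1 := by linarith [Nat.cast_nonneg (α := ℝ) n]
    calc ((n:ℝ) + 1) ^ 2 = ((n:ℝ) + 1) ^ 2 * 1 := by ring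
    _ ≤ ((n:ℝ) + 1) ^ 2 * ((n:ℝ) + 1) := by nlinarith
    _ = ((n:ℝ) + 1) ^ 3 := by ring
  have hSe : Summable (fun n : ℕ => Real.exp (-t) ^ (n + 1) / ((n : ℝ) + 1) ^ 3) := by
    have hr0 : (0:ℝ) ≤ Real.exp (-t) := (Real.exp_pos _).le
    have hr1 : Real.exp (-t) < 1 := Real.exp_lt_one_iff.mpr (by linarith)
    apply Summable.of_nonneg_of_le (fun n => by positivity) _
      (summable_geometric_of_lt_one hr0 hr1)
    intro n
    calc Real.exp (-t) ^ (n + 1) / ((n : ℝ) + 1) ^ 3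
        ≤ Real.exp (-t) ^ (n + 1) := by
          apply div_le_self (by positivity)
          have : (1:ℝ) ≤ (n:ℝ) + 1 := by linarith [Nat.cast_nonneg (α := ℝ) n]
          calc (1:ℝ) = 1 ^ 3 := by ring
          _ ≤ ((n:ℝ) + 1) ^ 3 := by gcongr
    _ ≤ Real.exp (-t) ^ n := pow_le_pow_of_le_one hr0 hr1.le (Nat.le_succ n)
  -- combined HasSum giving the right-hand side
  have hcomb := ((hS2.mul_left (-(1/t))).add (hS3.hasSum.mul_left (1/t^2))).sub
    (hSe.hasSum.mul_left (1/t^2))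
  have hRHS : HasSum (fun n : ℕ => ∫ x in Set.Ioc (0:ℝ) 1, F n x)
      (-Real.pi ^ 2 / (6 * t) +
        ((∑' k : ℕ, 1 / ((k : ℝ) + 1) ^ 3) -
            ∑' k : ℕ, (Real.exp (-t)) ^ (k + 1) / ((k : ℝ) + 1) ^ 3) / t ^ 2) := by
    convert hcomb using 1
    · rfl
    · funext n
      rw [hint_eval n]
      have hexp : Real.exp (-t) ^ (n + 1) = Real.exp (-(((n : ℝ) + 1) * t)) := by
        rw [← Real.exp_nat_mul]
        push_cast
        ring_nf
      rw [hexp]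
      have h1 := hn1 n
      field_simp
      ring
    · field_simp
      ring
  rw [intervalIntegral.integral_of_le zero_le_one,
    ← setIntegral_congr_fun measurableSet_Ioc htsum_eq]
  exact hkey.unique hRHS
end

section
/- For every t > 0 and every λ with |λ| < 2√t, the Wigner semicircle density solves the saddle-point equation in the principal value sense: lim_{ε→0⁺} ∫_{{λ' : |λ'| ≤ 2√t, |λ' − λ| ≥ ε}} (1/(2πt))·√(4t − λ'²)/(λ − λ') dλ' = λ/(2t). -/
open Real Set

noncomputable def Fsc (R l x : ℝ) : ℝ :=
  l * Real.arcsin (x / R) - Real.sqrt (R ^ 2 - x ^ 2) +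
    Real.sqrt (R ^ 2 - l ^ 2) *
      Real.log ((R ^ 2 - l * x + Real.sqrt (R ^ 2 - l ^ 2) * Real.sqrt (R ^ 2 - x ^ 2)) / (x - l))

noncomputable def Gsc (R l x : ℝ) : ℝ :=
  l * Real.arcsin (x / R) - Real.sqrt (R ^ 2 - x ^ 2) +
    Real.sqrt (R ^ 2 - l ^ 2) *
      Real.log (R ^ 2 - l * x + Real.sqrt (R ^ 2 - l ^ 2) * Real.sqrt (R ^ 2 - x ^ 2))

lemma Apos (R l x : ℝ) (hlR : |l| < R) (hx : |x| ≤ R) :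
    0 < R ^ 2 - l * x + Real.sqrt (R ^ 2 - l ^ 2) * Real.sqrt (R ^ 2 - x ^ 2) := by
  have h1 : l * x ≤ |l| * |x| := by
    calc l * x ≤ |l * x| := le_abs_self _
    _ = |l| * |x| := abs_mul l x
  have h2 : |l| * |x| < R * R := by
    rcases eq_or_lt_of_le (abs_nonneg x) with h | h
    · nlinarith [abs_nonneg l]
    · nlinarith
  have h3 : 0 ≤ Real.sqrt (R ^ 2 - l ^ 2) * Real.sqrt (R ^ 2 - x ^ 2) :=
    mul_nonneg (Real.sqrt_nonneg _) (Real.sqrt_nonneg _)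
  nlinarith

lemma Fsc_eq_Gsc (R l x : ℝ) (hlR : |l| < R) (hx : |x| ≤ R) (hxl : x ≠ l) :
    Fsc R l x = Gsc R l x - Real.sqrt (R ^ 2 - l ^ 2) * Real.log (x - l) := by
  unfold Fsc Gsc
  rw [Real.log_div (Apos R l x hlR hx).ne' (sub_ne_zero.2 hxl)]
  ring

lemma Gsc_continuousAt (R l x : ℝ) (hlR : |l| < R) (hx : |x| ≤ R) :
    ContinuousAt (Gsc R l) x := by
  have hc1 : Continuous fun y : ℝ =>
      R ^ 2 - l * y + Real.sqrt (R ^ 2 - l ^ 2) * Real.sqrt (R ^ 2 - y ^ 2) := by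
    continuity
  have hA := Apos R l x hlR hx
  apply ContinuousAt.add
  · apply ContinuousAt.sub
    · exact (continuousAt_const.mul ((Real.continuous_arcsin.comp
        (continuous_id.div_const R)).continuousAt))
    · exact (Real.continuous_sqrt.comp (by continuity)).continuousAt
  · apply continuousAt_const.mul
    have hlog := Real.continuousAt_log (x := R ^ 2 - l * x +
      Real.sqrt (R ^ 2 - l ^ 2) * Real.sqrt (R ^ 2 - x ^ 2)) hA.ne'
    exact hlog.comp (f := fun y : ℝ =>
      R ^ 2 - l * y + Real.sqrt (R ^ 2 - l ^ 2) * Real.sqrt (R ^ 2 - y ^ 2)) hc1.continuousAt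

lemma Fsc_continuousAt (R l x : ℝ) (hlR : |l| < R) (hx : |x| ≤ R) (hxl : x ≠ l) :
    ContinuousAt (Fsc R l) x := by
  have : ContinuousAt (fun y => Gsc R l y - Real.sqrt (R ^ 2 - l ^ 2) * Real.log (y - l)) x := by
    apply (Gsc_continuousAt R l x hlR hx).sub
    apply continuousAt_const.mul
    have hlog := Real.continuousAt_log (x := x - l) (sub_ne_zero.2 hxl)
    exact hlog.comp (f := fun y : ℝ => y - l) (by fun_prop)
  have hA := Apos R l x hlR hx
  have hAc : Continuous fun y : ℝ =>
      R ^ 2 - l * y + Real.sqrt (R ^ 2 - l ^ 2) * Real.sqrt (R ^ 2 - y ^ 2) := by continuity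
  have hopen : IsOpen {y : ℝ | (R ^ 2 - l * y + Real.sqrt (R ^ 2 - l ^ 2) * Real.sqrt (R ^ 2 - y ^ 2) ≠ 0) ∧ y ≠ l} :=
    (isOpen_ne.preimage hAc).inter (isOpen_ne.preimage continuous_id)
  have hev : ∀ᶠ y in nhds x, (fun y => Gsc R l y - Real.sqrt (R ^ 2 - l ^ 2) * Real.log (y - l)) y = Fsc R l y := by
    filter_upwards [hopen.mem_nhds ⟨hA.ne', hxl⟩] with y hy
    unfold Fsc Gsc
    rw [Real.log_div hy.1 (sub_ne_zero.2 hy.2)]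
    ring
  exact this.congr hev

lemma Fsc_hasDerivAt (R l x : ℝ) (hlR : |l| < R) (hx : x ∈ Set.Ioo (-R) R) (hxl : x ≠ l) :
    HasDerivAt (Fsc R l) (Real.sqrt (R ^ 2 - x ^ 2) / (l - x)) x := by
  obtain ⟨hx1, hx2⟩ := hx
  have hR : 0 < R := (abs_nonneg l).trans_lt hlR
  have hxR : |x| < R := abs_lt.2 ⟨hx1, hx2⟩
  have hu : 0 < R ^ 2 - x ^ 2 := by nlinarith [sq_abs x, sq_abs l, abs_nonneg x]
  have hs2 : 0 < R ^ 2 - l ^ 2 := by nlinarith [sq_abs l, abs_nonneg l]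
  set w := Real.sqrt (R ^ 2 - x ^ 2) with hw
  set s := Real.sqrt (R ^ 2 - l ^ 2) with hs
  have hwpos : 0 < w := Real.sqrt_pos.2 hu
  have hspos : 0 < s := Real.sqrt_pos.2 hs2
  have hw2 : w ^ 2 = R ^ 2 - x ^ 2 := Real.sq_sqrt hu.le
  have hs2' : s ^ 2 = R ^ 2 - l ^ 2 := Real.sq_sqrt hs2.le
  have hA : 0 < R ^ 2 - l * x + s * w := by nlinarith [abs_mul l x, abs_nonneg (l*x), le_abs_self (l*x), neg_abs_le (l*x), abs_nonneg x]
  have hxl' : x - l ≠ 0 := sub_ne_zero.2 hxl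
  -- arcsin part
  have h1 : HasDerivAt (fun y : ℝ => Real.arcsin (y / R)) (1 / Real.sqrt (1 - (x / R) ^ 2) * (1 / R)) x := by
    have hne1 : x / R ≠ -1 := by
      intro h; rw [div_eq_iff hR.ne'] at h; simp at h; nlinarith
    have hne2 : x / R ≠ 1 := by
      intro h; rw [div_eq_iff hR.ne'] at h; simp at h; nlinarith
    exact (Real.hasDerivAt_arcsin hne1 hne2).comp x ((hasDerivAt_id x).div_const R)
  -- sqrt part
  have hinner : HasDerivAt (fun y : ℝ => R ^ 2 - y ^ 2) (-(2 * x)) x := by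
    simpa using ((hasDerivAt_pow 2 x).const_sub (R ^ 2))
  have h2 : HasDerivAt (fun y : ℝ => Real.sqrt (R ^ 2 - y ^ 2)) (1 / (2 * w) * (-(2 * x))) x :=
    (Real.hasDerivAt_sqrt hu.ne').comp x hinner
  -- log part
  have hAder : HasDerivAt (fun y : ℝ => R ^ 2 - l * y + s * Real.sqrt (R ^ 2 - y ^ 2))
      (-l + s * (1 / (2 * w) * (-(2 * x)))) x := by
    have := ((hasDerivAt_id x).const_mul l).const_sub (R ^ 2)
    simpa [mul_comm] using this.fun_add (h2.const_mul s)
  have hden : HasDerivAt (fun y : ℝ => y - l) 1 x := by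
    simpa using (hasDerivAt_id x).sub_const l
  have hQ : HasDerivAt (fun y : ℝ => (R ^ 2 - l * y + s * Real.sqrt (R ^ 2 - y ^ 2)) / (y - l))
      (((-l + s * (1 / (2 * w) * (-(2 * x)))) * (x - l) -
        (R ^ 2 - l * x + s * w) * 1) / (x - l) ^ 2) x := hAder.div hden hxl'
  have hQval : (R ^ 2 - l * x + s * w) / (x - l) ≠ 0 := div_ne_zero hA.ne' hxl'
  have h3 : HasDerivAt (fun y : ℝ =>
      Real.log ((R ^ 2 - l * y + s * Real.sqrt (R ^ 2 - y ^ 2)) / (y - l)))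
      (((R ^ 2 - l * x + s * w) / (x - l))⁻¹ *
        (((-l + s * (1 / (2 * w) * (-(2 * x)))) * (x - l) -
          (R ^ 2 - l * x + s * w) * 1) / (x - l) ^ 2)) x :=
    by have := (Real.hasDerivAt_log hQval).comp x hQ; exact this
  have hF : HasDerivAt (Fsc R l)
      (l * (1 / Real.sqrt (1 - (x / R) ^ 2) * (1 / R)) - 1 / (2 * w) * (-(2 * x)) +
        s * (((R ^ 2 - l * x + s * w) / (x - l))⁻¹ *
          (((-l + s * (1 / (2 * w) * (-(2 * x)))) * (x - l) -
            (R ^ 2 - l * x + s * w) * 1) / (x - l) ^ 2))) x :=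
    ((h1.const_mul l).sub h2).add (h3.const_mul s)
  convert hF using 1
  have hsq : Real.sqrt (1 - (x / R) ^ 2) = w / R := by
    rw [show (1 - (x / R) ^ 2) = (w / R) ^ 2 by field_simp; linarith]
    exact Real.sqrt_sq (by positivity)
  rw [hsq, show l * (1 / (w / R) * (1 / R)) = l / w from by field_simp]
  rw [show R ^ 2 = w ^ 2 + x ^ 2 from by linarith]
  have hs3 : s ^ 2 = w ^ 2 + x ^ 2 - l ^ 2 := by linarith
  have hA' : w ^ 2 + x ^ 2 - l * x + s * w ≠ 0 := by nlinarith
  have hlx : l - x ≠ 0 := fun h => hxl (by linarith)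
  field_simp
  have hA'' : w ^ 2 + x ^ 2 - x * l + w * s ≠ 0 := by rw [mul_comm w s, mul_comm x l]; exact hA'
  field_simp
  linear_combination ((x-l)*(w*s-(w^2+x^2-l*x+w*s))) * hs3

lemma Fsc_integral (R l a b : ℝ) (hlR : |l| < R) (hab : a ≤ b) (ha : -R ≤ a) (hb : b ≤ R)
    (hl : l ∉ Set.Icc a b) :
    ∫ x in a..b, Real.sqrt (R ^ 2 - x ^ 2) / (l - x) = Fsc R l b - Fsc R l a := by
  apply intervalIntegral.integral_eq_sub_of_hasDeriv_right_of_le hab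
  · intro x hx
    have hxl : x ≠ l := fun h => hl (h ▸ hx)
    exact (Fsc_continuousAt R l x hlR (abs_le.2 ⟨le_trans ha hx.1, le_trans hx.2 hb⟩)
      hxl).continuousWithinAt
  · intro x hx
    have hxl : x ≠ l := fun h => hl (h ▸ Set.mem_Icc.2 ⟨hx.1.le, hx.2.le⟩)
    exact (Fsc_hasDerivAt R l x hlR ⟨lt_of_le_of_lt ha hx.1, lt_of_lt_of_le hx.2 hb⟩
      hxl).hasDerivWithinAt
  · apply ContinuousOn.intervalIntegrable
    rw [Set.uIcc_of_le hab]
    apply ContinuousOn.div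
    · exact (Real.continuous_sqrt.comp (by continuity)).continuousOn
    · exact (continuous_const.sub continuous_id).continuousOn
    · intro x hx h
      have hx' : l = x := sub_eq_zero.1 h
      exact hl (hx' ▸ hx)

/-- Wigner's semicircle law: for `t > 0` and `|λ| < 2√t`, the semicircle density
solves the saddle-point equation in the principal value sense:
`P∫_{|λ'| ≤ 2√t} (1/(2πt))√(4t − λ'²)/(λ − λ') dλ' = λ/(2t)`. -/
theorem wigner_semicircle_saddle_point (t l : ℝ) (ht : 0 < t)
    (hl : |l| < 2 * Real.sqrt t) :
    Filter.Tendsto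
      (fun ε : ℝ =>
        ∫ x in {x : ℝ | |x| ≤ 2 * Real.sqrt t ∧ ε ≤ |x - l|},
          (1 / (2 * Real.pi * t)) * Real.sqrt (4 * t - x ^ 2) / (l - x))
      (nhdsWithin 0 (Set.Ioi 0)) (nhds (l / (2 * t))) := by
  have hπ := Real.pi_pos
  set R := 2 * Real.sqrt t with hRdef
  have hR : 0 < R := by
    rw [hRdef]; positivity
  have hR2 : R ^ 2 = 4 * t := by
    rw [hRdef, mul_pow, Real.sq_sqrt ht.le]; ring
  have hlR : |l| < R := hl
  obtain ⟨hl2, hl1⟩ := abs_lt.1 hlR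
  set c := 1 / (2 * Real.pi * t) with hcdef
  have hδ : 0 < R - |l| := sub_pos.2 hlR
  set ψ : ℝ → ℝ := fun ε => c * (Gsc R l (l - ε) - Gsc R l (l + ε) + Real.pi * l) with hψ
  -- limit of ψ
  have hlim : Filter.Tendsto ψ (nhdsWithin 0 (Set.Ioi 0)) (nhds (l / (2 * t))) := by
    have hc1 : ContinuousAt (fun ε : ℝ => Gsc R l (l - ε)) 0 := by
      have h1 : ContinuousAt (Gsc R l) ((fun ε : ℝ => l - ε) 0) := by
        simp only [sub_zero]
        exact Gsc_continuousAt R l l hlR hlR.le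
      exact h1.comp (by fun_prop)
    have hc2 : ContinuousAt (fun ε : ℝ => Gsc R l (l + ε)) 0 := by
      have h1 : ContinuousAt (Gsc R l) ((fun ε : ℝ => l + ε) 0) := by
        simp only [add_zero]
        exact Gsc_continuousAt R l l hlR hlR.le
      exact h1.comp (by fun_prop)
    have hcont : ContinuousAt ψ 0 :=
      continuousAt_const.mul ((hc1.sub hc2).add continuousAt_const)
    have h0 : ψ 0 = l / (2 * t) := by
      simp only [hψ, sub_zero, add_zero, sub_self, zero_add, hcdef]
      field_simp
    exact h0 ▸ hcont.tendsto.mono_left nhdsWithin_le_nhds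
  apply Filter.Tendsto.congr' _ hlim
  -- eventual equality
  filter_upwards [Ioo_mem_nhdsGT_of_mem (Set.left_mem_Ico.2 hδ)] with ε hε
  obtain ⟨hε0, hεδ⟩ := hε
  have hla := le_abs_self l
  have hlb := neg_abs_le l
  have hεl1 : l + ε ≤ R := by linarith
  have hεl2 : -R ≤ l - ε := by linarith
  have hset : {x : ℝ | |x| ≤ R ∧ ε ≤ |x - l|} = Set.Icc (-R) (l - ε) ∪ Set.Icc (l + ε) R := by
    ext x
    simp only [Set.mem_setOf_eq, Set.mem_union, Set.mem_Icc, abs_le, le_abs]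
    constructor
    · rintro ⟨⟨h1, h2⟩, h3 | h4⟩
      · right; exact ⟨by linarith, h2⟩
      · left; exact ⟨h1, by linarith⟩
    · rintro (⟨h1, h2⟩ | ⟨h1, h2⟩)
      · exact ⟨⟨h1, by linarith⟩, Or.inr (by linarith)⟩
      · exact ⟨⟨by linarith, h2⟩, Or.inl (by linarith)⟩
  have hcont' : ∀ a b : ℝ, l ∉ Set.Icc a b → ContinuousOn (fun x =>
      1 / (2 * Real.pi * t) * Real.sqrt (4 * t - x ^ 2) / (l - x)) (Set.Icc a b) := by
    intro a b hab
    apply ContinuousOn.div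
    · exact (continuous_const.mul (Real.continuous_sqrt.comp (by continuity))).continuousOn
    · exact (continuous_const.sub continuous_id).continuousOn
    · intro x hx h
      exact hab ((sub_eq_zero.1 h) ▸ hx)
  have hnmem1 : l ∉ Set.Icc (-R) (l - ε) := by
    simp only [Set.mem_Icc, not_and]
    intro _; linarith
  have hnmem2 : l ∉ Set.Icc (l + ε) R := by
    simp only [Set.mem_Icc, not_and]
    intro h; linarith
  have hdisj : Disjoint (Set.Icc (-R) (l - ε)) (Set.Icc (l + ε) R) := by
    rw [Set.disjoint_left]
    intro x hx1 hx2
    have a1 := (Set.mem_Icc.1 hx1).2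
    have a2 := (Set.mem_Icc.1 hx2).1
    linarith
  have hint1 : MeasureTheory.IntegrableOn (fun x =>
      1 / (2 * Real.pi * t) * Real.sqrt (4 * t - x ^ 2) / (l - x)) (Set.Icc (-R) (l - ε)) :=
    (hcont' _ _ hnmem1).integrableOn_Icc
  have hint2 : MeasureTheory.IntegrableOn (fun x =>
      1 / (2 * Real.pi * t) * Real.sqrt (4 * t - x ^ 2) / (l - x)) (Set.Icc (l + ε) R) :=
    (hcont' _ _ hnmem2).integrableOn_Icc
  have hre : ∀ x : ℝ, 1 / (2 * Real.pi * t) * Real.sqrt (4 * t - x ^ 2) / (l - x)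
      = c * (Real.sqrt (R ^ 2 - x ^ 2) / (l - x)) := by
    intro x; rw [hR2, hcdef]; ring
  have e1 : ∫ x in Set.Icc (-R) (l - ε),
      1 / (2 * Real.pi * t) * Real.sqrt (4 * t - x ^ 2) / (l - x)
      = c * (Fsc R l (l - ε) - Fsc R l (-R)) := by
    rw [MeasureTheory.integral_Icc_eq_integral_Ioc,
      ← intervalIntegral.integral_of_le (by linarith : -R ≤ l - ε)]
    simp_rw [hre]
    rw [intervalIntegral.integral_const_mul,
      Fsc_integral R l (-R) (l - ε) hlR (by linarith) le_rfl (by linarith) hnmem1]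
  have e2 : ∫ x in Set.Icc (l + ε) R,
      1 / (2 * Real.pi * t) * Real.sqrt (4 * t - x ^ 2) / (l - x)
      = c * (Fsc R l R - Fsc R l (l + ε)) := by
    rw [MeasureTheory.integral_Icc_eq_integral_Ioc,
      ← intervalIntegral.integral_of_le (by linarith : l + ε ≤ R)]
    simp_rw [hre]
    rw [intervalIntegral.integral_const_mul,
      Fsc_integral R l (l + ε) R hlR (by linarith) (by linarith) le_rfl hnmem2]
  have key : (∫ x in {x : ℝ | |x| ≤ R ∧ ε ≤ |x - l|},
      1 / (2 * Real.pi * t) * Real.sqrt (4 * t - x ^ 2) / (l - x))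
      = c * (Fsc R l (l - ε) - Fsc R l (-R)) + c * (Fsc R l R - Fsc R l (l + ε)) := by
    rw [hset, MeasureTheory.setIntegral_union hdisj measurableSet_Icc hint1 hint2, e1, e2]
  -- endpoint values
  have hRl : R - l ≠ 0 := sub_ne_zero.2 hl1.ne'
  have hRl' : -R - l ≠ 0 := by intro h; apply hl2.ne; linarith
  have hFp : Fsc R l R = l * (Real.pi / 2) + Real.sqrt (R ^ 2 - l ^ 2) * Real.log R := by
    unfold Fsc
    rw [div_self hR.ne', Real.arcsin_one, sub_self, Real.sqrt_zero]
    rw [show R ^ 2 - l * R + Real.sqrt (R ^ 2 - l ^ 2) * 0 = R * (R - l) by ring,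
      mul_div_assoc, div_self hRl, mul_one]
    ring
  have hFm : Fsc R l (-R) = -(l * (Real.pi / 2)) + Real.sqrt (R ^ 2 - l ^ 2) * Real.log R := by
    unfold Fsc
    rw [show (-R) / R = -1 by field_simp, Real.arcsin_neg_one,
      show R ^ 2 - (-R) ^ 2 = 0 by ring, Real.sqrt_zero]
    rw [show R ^ 2 - l * -R + Real.sqrt (R ^ 2 - l ^ 2) * 0 = (-R) * (-R - l) by ring,
      mul_div_assoc, div_self hRl', mul_one, Real.log_neg_eq_log]
    ring
  have hF1 : Fsc R l (l - ε) = Gsc R l (l - ε) - Real.sqrt (R ^ 2 - l ^ 2) * Real.log (-ε) := by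
    rw [Fsc_eq_Gsc R l (l - ε) hlR (abs_le.2 ⟨by linarith, by linarith⟩)
      (ne_of_lt (sub_lt_self l hε0)), show l - ε - l = -ε by ring]
  have hF2 : Fsc R l (l + ε) = Gsc R l (l + ε) - Real.sqrt (R ^ 2 - l ^ 2) * Real.log ε := by
    rw [Fsc_eq_Gsc R l (l + ε) hlR (abs_le.2 ⟨by linarith, by linarith⟩)
      (ne_of_gt (lt_add_of_pos_right l hε0)), show l + ε - l = ε by ring]
  rw [hψ]
  show c * (Gsc R l (l - ε) - Gsc R l (l + ε) + Real.pi * l) = _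
  rw [key, hFp, hFm, hF1, hF2, Real.log_neg_eq_log]
  ring
end
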